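/- Suppose V̇_Ē = −V_Ē S_Γ + M where S_Γ = −(k_p/2)A_Z⁻¹C_pC_pᵀA_Z^{-T} + (1/2)A_ZᵀK_qA_Z and M = −k_p V_Ē A_Z⁻¹C_pC_pᵀA_Z^{-T}. Then d/dt |V_Ē|² = −k_p |V_Ē A_Z⁻¹ C_p|² − tr(A_Z V_Ēᵀ V_Ē A_Zᵀ K_q), which is ≤ 0 whenever k_p > 0 and K_q is positive semidefinite. -/

import Mathlib

open Matrix

noncomputable section

/-- Index type for 5×5 block matrices with blocks of sizes 3 and 2. -/
abbrev Idx : Type := Fin 3 ⊕ Fin 2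

/-- The 3×3 skew-symmetric matrix `Ω^×` of a vector `Ω ∈ ℝ³`. -/
def skew (Ω : Fin 3 → ℝ) : Matrix (Fin 3) (Fin 3) ℝ :=
  !![0, -Ω 2, Ω 1; Ω 2, 0, -Ω 0; -Ω 1, Ω 0, 0]

/-- Membership in the special orthogonal group SO(3). -/
def SO3 (R : Matrix (Fin 3) (Fin 3) ℝ) : Prop := Rᵀ * R = 1 ∧ R.det = 1

/-- The block matrix `[[R, V], [0, A]]`. -/
def mkAff (R : Matrix (Fin 3) (Fin 3) ℝ) (V : Matrix (Fin 3) (Fin 2) ℝ)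
    (A : Matrix (Fin 2) (Fin 2) ℝ) : Matrix Idx Idx ℝ := fromBlocks R V 0 A

/-- Membership in the extended similarity group SIM₂(3). -/
def inSIM23 (Z : Matrix Idx Idx ℝ) : Prop :=
  ∃ R V A, SO3 R ∧ IsUnit A.det ∧ Z = mkAff R V A

/-- Membership in the extended special Euclidean group SE₂(3). -/
def inSE23 (X : Matrix Idx Idx ℝ) : Prop :=
  ∃ R V, SO3 R ∧ X = mkAff R V 1

/-- The Lie algebra element `[[Ω^×, W], [0, S]]`. -/
def mkAlg (Ω : Fin 3 → ℝ) (W : Matrix (Fin 3) (Fin 2) ℝ)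
    (S : Matrix (Fin 2) (Fin 2) ℝ) : Matrix Idx Idx ℝ := fromBlocks (skew Ω) W 0 S

/-- The 3×2 matrix with columns `a` and `b`. -/
def two (a b : Fin 3 → ℝ) : Matrix (Fin 3) (Fin 2) ℝ := Matrix.of fun i j => ![a i, b i] j

lemma psd_eq_ct_mul_self (Kq : Matrix (Fin 2) (Fin 2) ℝ) (hKq : Kq.PosSemidef) :
    ∃ B : Matrix (Fin 2) (Fin 2) ℝ, Kq = Bᴴ * B := by
  open scoped MatrixOrder Matrix.Norms.L2Operator in
  obtain ⟨B, hB⟩ := CStarAlgebra.nonneg_iff_eq_star_mul_self.mp hKq.nonneg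
  exact ⟨B, hB⟩

attribute [local instance] Matrix.normedAddCommGroup Matrix.normedSpace

lemma entry_hasDerivAt {V : ℝ → Matrix (Fin 3) (Fin 2) ℝ} {D : Matrix (Fin 3) (Fin 2) ℝ}
    {t : ℝ} (h : HasDerivAt V D t) (i : Fin 3) (j : Fin 2) :
    HasDerivAt (fun s => V s i j) (D i j) t := by
  let L : Matrix (Fin 3) (Fin 2) ℝ →ₗ[ℝ] ℝ :=
    { toFun := fun M => M i j, map_add' := fun _ _ => rfl, map_smul' := fun _ _ => rfl }
  exact L.toContinuousLinearMap.hasFDerivAt.comp_hasDerivAt t h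

lemma alg_aux (kp : ℝ) (Vt : Matrix (Fin 3) (Fin 2) ℝ) (B AZ Kq : Matrix (Fin 2) (Fin 2) ℝ)
    (Cp : Matrix (Fin 2) (Fin 1) ℝ) (D : Matrix (Fin 3) (Fin 2) ℝ)
    (hD : D = -(Vt * (-((kp / 2) • (B * Cp * Cpᵀ * Bᵀ)) + (1 / 2 : ℝ) • (AZᵀ * Kq * AZ)))
        + -(kp • (Vt * B * Cp * Cpᵀ * Bᵀ))) :
    (∑ j : Fin 2, ∑ i : Fin 3, (D i j * Vt i j + Vt i j * D i j)) =
    -(kp * ((Vt * B * Cp)ᵀ * (Vt * B * Cp)).trace) - (AZ * Vtᵀ * Vt * AZᵀ * Kq).trace := by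
  subst hD
  simp [Matrix.trace, Matrix.mul_apply, Matrix.diag, Fin.sum_univ_succ, Finset.mul_sum,
    Finset.sum_mul]
  ring

lemma tr_u_nonneg (u : Matrix (Fin 3) (Fin 1) ℝ) : 0 ≤ (uᵀ * u).trace := by
  simp [Matrix.trace, Matrix.mul_apply, Matrix.diag, Fin.sum_univ_succ]
  ring_nf
  positivity

lemma tr_swap (Vt AZ : Matrix _ _ ℝ) (B : Matrix (Fin 2) (Fin 2) ℝ) :
    (AZ * Vtᵀ * (Vt : Matrix (Fin 3) (Fin 2) ℝ) * AZᵀ * (Bᵀ * B)).trace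
      = ((B * AZ * Vtᵀ)ᵀ * (B * AZ * Vtᵀ)).trace := by
  simp [Matrix.trace, Matrix.mul_apply, Matrix.diag, Fin.sum_univ_succ, Finset.mul_sum,
    Finset.sum_mul]
  ring

lemma tr_c_nonneg (C : Matrix (Fin 2) (Fin 3) ℝ) : 0 ≤ (Cᵀ * C).trace := by
  simp [Matrix.trace, Matrix.mul_apply, Matrix.diag, Fin.sum_univ_succ]
  ring_nf
  positivity

/-- with `V̇_Ē = −V_Ē S_Γ + M` for the stated `S_Γ` and `M`, one has
`d/dt |V_Ē|² = −k_p |V_Ē A_Z⁻¹ C_p|² − tr(A_Z V_Ēᵀ V_Ē A_Zᵀ K_q) ≤ 0` whenever `k_p > 0`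
and `K_q` is positive semidefinite. -/
theorem lyapunov_velocity_decrease (kp : ℝ) (hkp : 0 < kp)
    (Kq : Matrix (Fin 2) (Fin 2) ℝ) (hKq : Kq.PosSemidef)
    (V : ℝ → Matrix (Fin 3) (Fin 2) ℝ) (AZ : ℝ → Matrix (Fin 2) (Fin 2) ℝ)
    (Cp : Matrix (Fin 2) (Fin 1) ℝ)
    (hV : ∀ t, HasDerivAt V
      (-(V t * (-((kp / 2) • ((AZ t)⁻¹ * Cp * Cpᵀ * ((AZ t)⁻¹)ᵀ))
          + (1 / 2 : ℝ) • ((AZ t)ᵀ * Kq * AZ t)))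
        + -(kp • (V t * (AZ t)⁻¹ * Cp * Cpᵀ * ((AZ t)⁻¹)ᵀ))) t) :
    ∀ t, HasDerivAt (fun s => ((V s)ᵀ * V s).trace)
        (-(kp * ((V t * (AZ t)⁻¹ * Cp)ᵀ * (V t * (AZ t)⁻¹ * Cp)).trace)
          - (AZ t * (V t)ᵀ * V t * (AZ t)ᵀ * Kq).trace) t ∧
      -(kp * ((V t * (AZ t)⁻¹ * Cp)ᵀ * (V t * (AZ t)⁻¹ * Cp)).trace)
          - (AZ t * (V t)ᵀ * V t * (AZ t)ᵀ * Kq).trace ≤ 0 := by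
  intro t
  have hd := hV t
  have hent : ∀ (i : Fin 3) (j : Fin 2), HasDerivAt (fun s => V s i j)
      ((-(V t * (-((kp / 2) • ((AZ t)⁻¹ * Cp * Cpᵀ * ((AZ t)⁻¹)ᵀ))
          + (1 / 2 : ℝ) • ((AZ t)ᵀ * Kq * AZ t)))
        + -(kp • (V t * (AZ t)⁻¹ * Cp * Cpᵀ * ((AZ t)⁻¹)ᵀ))) i j) t :=
    fun i j => entry_hasDerivAt hd i j
  have hsum : HasDerivAt (fun s => ∑ j : Fin 2, ∑ i : Fin 3, V s i j * V s i j)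
      (∑ j : Fin 2, ∑ i : Fin 3,
        ((-(V t * (-((kp / 2) • ((AZ t)⁻¹ * Cp * Cpᵀ * ((AZ t)⁻¹)ᵀ))
          + (1 / 2 : ℝ) • ((AZ t)ᵀ * Kq * AZ t)))
        + -(kp • (V t * (AZ t)⁻¹ * Cp * Cpᵀ * ((AZ t)⁻¹)ᵀ))) i j * V t i j
        + V t i j * (-(V t * (-((kp / 2) • ((AZ t)⁻¹ * Cp * Cpᵀ * ((AZ t)⁻¹)ᵀ))
          + (1 / 2 : ℝ) • ((AZ t)ᵀ * Kq * AZ t)))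
        + -(kp • (V t * (AZ t)⁻¹ * Cp * Cpᵀ * ((AZ t)⁻¹)ᵀ))) i j)) t :=
    HasDerivAt.fun_sum fun j _ => HasDerivAt.fun_sum fun i _ => (hent i j).mul (hent i j)
  have hval := alg_aux kp (V t) (AZ t)⁻¹ (AZ t) Kq Cp _ rfl
  have hfun : (fun s => ((V s)ᵀ * V s).trace)
      = fun s => ∑ j : Fin 2, ∑ i : Fin 3, V s i j * V s i j := by
    funext s
    simp [Matrix.trace, Matrix.mul_apply, Matrix.diag]
  constructor
  · rw [hfun, ← hval]
    exact hsum
  · obtain ⟨B, hB⟩ := psd_eq_ct_mul_self Kq hKq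
    have hBt : Kq = Bᵀ * B := by
      rw [hB]; congr 1
    have h1 : 0 ≤ ((V t * (AZ t)⁻¹ * Cp)ᵀ * (V t * (AZ t)⁻¹ * Cp)).trace :=
      tr_u_nonneg _
    have h2 : 0 ≤ (AZ t * (V t)ᵀ * V t * (AZ t)ᵀ * Kq).trace := by
      rw [hBt, tr_swap]
      exact tr_c_nonneg _
    nlinarith
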